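/- For all Z > 0, R > 0, ε ∈ (0,1) and 0 < k_min ≤ k_max there exists C₂ > 0, depending only on R, Z, k_min, k_max and ε, such that for every λ ≥ 0, every k ∈ [k_min, k_max], all twice continuously differentiable q, r : [0,Z] → ℝ whose values, first derivatives and second derivatives are bounded in absolute value by R, and all twice continuously differentiable h₁, h₂ : [0,Z] → ℝ whose values and first derivatives are bounded in absolute value by R, the first-order Taylor remainder of J_λ satisfies: | J_λ(q + h₁, r + h₂) − J_λ(q,r) − 2 ∫₀^Z [L₁(q,r)(z)·L₁,lin(h₁,h₂)(z) + L₂(q,r)(z)·L₂,lin(h₁,h₂)(z)] e^{−2λz} dz | ≤ C₂ ∫₀^Z (h₁'(z)² + h₁''(z)² + h₂'(z)² + h₂''(z)²) dz. (This expresses that the bounded linear functional (h₁,h₂) ↦ 2∫₀^Z [L₁·L₁,lin + L₂·L₂,lin] e^{−2λz} dz is the Fréchet derivative of J_λ at (q,r).) -/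

import Mathlib

set_option linter.unusedTactic false
set_option linter.unreachableTactic false
set_option linter.unusedVariables false


set_option maxHeartbeats 2000000 in
lemma key_scalar (M c₁ c₂ R : ℝ) (hM : 0 ≤ M) (hc₁ : 0 ≤ c₁) (hc₂ : 0 ≤ c₂) (hR : 0 ≤ R)
    (a b A B Q u v p s w : ℝ)
    (hu : 0 ≤ u) (hv : 0 ≤ v) (hp : 0 ≤ p) (hs : 0 ≤ s)
    (huR : u ≤ R) (hvR : v ≤ R)
    (ha : |a| ≤ M) (hb : |b| ≤ M)
    (hA : |A| ≤ p + c₁ * (u + v)) (hB : |B| ≤ s + c₁ * (u + v))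
    (hQ : |Q| ≤ c₂ * (u ^ 2 + v ^ 2))
    (hw0 : 0 ≤ w) (hw1 : w ≤ 1) :
    |(2 * (a + b) * Q + (A + Q) ^ 2 + (B + Q) ^ 2) * w| ≤
      (4 * M * c₂ + 16 * c₁ ^ 2 + 16 * c₂ ^ 2 * R ^ 2 + 7) * (u ^ 2 + p ^ 2 + v ^ 2 + s ^ 2) := by
  set T := u ^ 2 + v ^ 2 with hTdef
  set σ := u ^ 2 + p ^ 2 + v ^ 2 + s ^ 2 with hσ
  have hT0 : 0 ≤ T := by positivity
  have hTσ : T ≤ σ := by nlinarith [sq_nonneg p, sq_nonneg s]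
  have hσ0 : 0 ≤ σ := by positivity
  have hTR : T ≤ 2 * R ^ 2 := by nlinarith
  clear_value T σ
  have hstep : |(2 * (a + b) * Q + (A + Q) ^ 2 + (B + Q) ^ 2) * w|
      ≤ |2 * (a + b) * Q + (A + Q) ^ 2 + (B + Q) ^ 2| := by
    rw [abs_mul]
    nlinarith [abs_nonneg (2 * (a + b) * Q + (A + Q) ^ 2 + (B + Q) ^ 2), abs_of_nonneg hw0]
  refine hstep.trans ?_
  have h1 : |2 * (a + b) * Q| ≤ 4 * M * (c₂ * T) := by
    rw [abs_mul, abs_mul]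
    have hab2 : |a + b| ≤ 2 * M := (abs_add_le a b).trans (by linarith)
    have h2 : (0:ℝ) ≤ |Q| := abs_nonneg Q
    calc |2| * |a + b| * |Q| = 2 * |a + b| * |Q| := by norm_num
    _ ≤ 2 * (2 * M) * (c₂ * T) := by
        apply mul_le_mul (by nlinarith [abs_nonneg (a+b)]) hQ h2 (by positivity)
    _ = 4 * M * (c₂ * T) := by ring
  set X := c₁ * (u + v) + c₂ * T with hX
  have hX0 : 0 ≤ X := by rw [hX]; positivity
  have k1 : (u + v) ^ 2 ≤ 2 * T := by nlinarith [sq_nonneg (u - v)]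
  clear_value X
  have hAQ : |A + Q| ≤ p + X := (abs_add_le A Q).trans (by rw [hX]; linarith)
  have hBQ : |B + Q| ≤ s + X := (abs_add_le B Q).trans (by rw [hX]; linarith)
  have hA2 : (A + Q) ^ 2 ≤ (p + X) ^ 2 := by
    rw [← sq_abs]; exact pow_le_pow_left₀ (abs_nonneg _) hAQ 2
  have hB2 : (B + Q) ^ 2 ≤ (s + X) ^ 2 := by
    rw [← sq_abs]; exact pow_le_pow_left₀ (abs_nonneg _) hBQ 2
  have tri : |2 * (a + b) * Q + (A + Q) ^ 2 + (B + Q) ^ 2|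
      ≤ |2 * (a + b) * Q| + (A + Q) ^ 2 + (B + Q) ^ 2 := by
    have t1 := abs_add_le (2 * (a + b) * Q + (A + Q) ^ 2) ((B + Q) ^ 2)
    have t2 := abs_add_le (2 * (a + b) * Q) ((A + Q) ^ 2)
    have e1 : |(A + Q) ^ 2| = (A + Q) ^ 2 := abs_of_nonneg (sq_nonneg _)
    have e2 : |(B + Q) ^ 2| = (B + Q) ^ 2 := abs_of_nonneg (sq_nonneg _)
    rw [e1] at t2; rw [e2] at t1; linarith
  have hX2 : X ^ 2 ≤ (4 * c₁ ^ 2 + 4 * c₂ ^ 2 * R ^ 2) * T := by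
    have a1 : X ^ 2 ≤ 2 * (c₁ * (u + v)) ^ 2 + 2 * (c₂ * T) ^ 2 := by
      rw [hX]; nlinarith [sq_nonneg (c₁ * (u + v) - c₂ * T)]
    have a2 : 2 * (c₁ * (u + v)) ^ 2 ≤ 4 * c₁ ^ 2 * T := by
      have := mul_le_mul_of_nonneg_left k1 (sq_nonneg c₁)
      nlinarith
    have a3 : 2 * (c₂ * T) ^ 2 ≤ 4 * c₂ ^ 2 * R ^ 2 * T := by
      have h0 := mul_le_mul_of_nonneg_left hTR (mul_nonneg (sq_nonneg c₂) hT0)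
      nlinarith
    have he : (4 * c₁ ^ 2 + 4 * c₂ ^ 2 * R ^ 2) * T = 4 * c₁ ^ 2 * T + 4 * c₂ ^ 2 * R ^ 2 * T := by
      ring
    linarith
  have hpX : (p + X) ^ 2 ≤ 2 * p ^ 2 + 2 * X ^ 2 := by nlinarith [sq_nonneg (p - X)]
  have hsX : (s + X) ^ 2 ≤ 2 * s ^ 2 + 2 * X ^ 2 := by nlinarith [sq_nonneg (s - X)]
  have hMT : 4 * M * (c₂ * T) ≤ 4 * M * c₂ * σ := by
    have h0 : (0:ℝ) ≤ 4 * M * c₂ := by positivity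
    have := mul_le_mul_of_nonneg_left hTσ h0
    linarith
  have hcT : (16 * c₁ ^ 2 + 16 * c₂ ^ 2 * R ^ 2) * T ≤ (16 * c₁ ^ 2 + 16 * c₂ ^ 2 * R ^ 2) * σ := by
    have h0 : (0:ℝ) ≤ 16 * c₁ ^ 2 + 16 * c₂ ^ 2 * R ^ 2 := by positivity
    exact mul_le_mul_of_nonneg_left hTσ h0
  have hps : 2 * p ^ 2 + 2 * s ^ 2 ≤ 7 * σ := by nlinarith [sq_nonneg u, sq_nonneg v]
  linarith [tri, h1, hA2, hB2, hpX, hsX, hX2, hMT, hcT, hps]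


lemma L1_abs_bound (ε kmin kmax R k qpp qp rp : ℝ)
    (hε : 0 < ε) (hkmin : 0 < kmin) (hk1 : kmin ≤ k) (hk2 : k ≤ kmax) (hR : 0 < R)
    (h1 : |qpp| ≤ R) (h2 : |qp| ≤ R) (h3 : |rp| ≤ R) :
    |qpp + (2 * k / ε) * qp * (qp - rp) + (1 / ε ^ 2) * (qp - rp) ^ 2
      - 2 * Real.sqrt k * qp - (qp - rp) / (ε * Real.sqrt k)|
    ≤ R + (4 * kmax / ε) * R ^ 2 + 4 * R ^ 2 / ε ^ 2 + 2 * Real.sqrt kmax * R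
      + 2 * R / (ε * Real.sqrt kmin) := by
  have hk0 : 0 < k := lt_of_lt_of_le hkmin hk1
  have hkx : 0 < kmax := lt_of_lt_of_le hk0 hk2
  have hsk : 0 < Real.sqrt k := Real.sqrt_pos.mpr hk0
  have hskm : 0 < Real.sqrt kmin := Real.sqrt_pos.mpr hkmin
  have hd : |qp - rp| ≤ 2 * R := (abs_sub qp rp).trans (by linarith)
  have t2 : |(2 * k / ε) * qp * (qp - rp)| ≤ (4 * kmax / ε) * R ^ 2 := by
    rw [abs_mul, abs_mul, abs_of_nonneg (by positivity : (0:ℝ) ≤ 2 * k / ε)]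
    calc 2 * k / ε * |qp| * |qp - rp| ≤ 2 * kmax / ε * R * (2 * R) := by
          gcongr <;> positivity
      _ = (4 * kmax / ε) * R ^ 2 := by ring
  have t3 : |(1 / ε ^ 2) * (qp - rp) ^ 2| ≤ 4 * R ^ 2 / ε ^ 2 := by
    rw [abs_mul, abs_of_nonneg (by positivity : (0:ℝ) ≤ 1 / ε ^ 2),
      abs_of_nonneg (sq_nonneg _)]
    have : (qp - rp) ^ 2 ≤ (2 * R) ^ 2 := by
      rw [← sq_abs]; exact pow_le_pow_left₀ (abs_nonneg _) hd 2
    calc (1 / ε ^ 2) * (qp - rp) ^ 2 ≤ (1 / ε ^ 2) * (2 * R) ^ 2 := by gcongr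
      _ = 4 * R ^ 2 / ε ^ 2 := by ring
  have t4 : |2 * Real.sqrt k * qp| ≤ 2 * Real.sqrt kmax * R := by
    rw [abs_mul, abs_of_nonneg (by positivity : (0:ℝ) ≤ 2 * Real.sqrt k)]
    gcongr <;> first | positivity | exact Real.sqrt_le_sqrt hk2 | exact h2
  have t5 : |(qp - rp) / (ε * Real.sqrt k)| ≤ 2 * R / (ε * Real.sqrt kmin) := by
    rw [abs_div, abs_of_nonneg (by positivity : (0:ℝ) ≤ ε * Real.sqrt k)]
    gcongr <;> first | positivity | exact Real.sqrt_le_sqrt hk1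
  have tri : |qpp + (2 * k / ε) * qp * (qp - rp) + (1 / ε ^ 2) * (qp - rp) ^ 2
      - 2 * Real.sqrt k * qp - (qp - rp) / (ε * Real.sqrt k)|
      ≤ |qpp| + |(2 * k / ε) * qp * (qp - rp)| + |(1 / ε ^ 2) * (qp - rp) ^ 2|
        + |2 * Real.sqrt k * qp| + |(qp - rp) / (ε * Real.sqrt k)| := by
    have a1 := abs_sub (qpp + (2 * k / ε) * qp * (qp - rp) + (1 / ε ^ 2) * (qp - rp) ^ 2
      - 2 * Real.sqrt k * qp) ((qp - rp) / (ε * Real.sqrt k))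
    have a2 := abs_sub (qpp + (2 * k / ε) * qp * (qp - rp) + (1 / ε ^ 2) * (qp - rp) ^ 2)
      (2 * Real.sqrt k * qp)
    have a3 := abs_add_le (qpp + (2 * k / ε) * qp * (qp - rp)) ((1 / ε ^ 2) * (qp - rp) ^ 2)
    have a4 := abs_add_le qpp ((2 * k / ε) * qp * (qp - rp))
    linarith
  linarith


lemma Llin_abs_bound (ε kmin kmax R k hpp hp1 hp2 qp rp : ℝ)
    (hε : 0 < ε) (hkmin : 0 < kmin) (hk1 : kmin ≤ k) (hk2 : k ≤ kmax) (hR : 0 < R)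
    (h2 : |qp| ≤ R) (h3 : |rp| ≤ R) :
    |hpp + (2 * k / ε) * hp1 * (qp - rp) + (2 * k / ε) * qp * (hp1 - hp2)
      + (2 / ε ^ 2) * (qp - rp) * (hp1 - hp2)
      - 2 * Real.sqrt k * hp1 - (hp1 - hp2) / (ε * Real.sqrt k)|
    ≤ |hpp| + (6 * kmax * R / ε + 4 * R / ε ^ 2 + 2 * Real.sqrt kmax
        + 1 / (ε * Real.sqrt kmin)) * (|hp1| + |hp2|) := by
  have hk0 : 0 < k := lt_of_lt_of_le hkmin hk1
  have hkx : 0 < kmax := lt_of_lt_of_le hk0 hk2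
  have hskm : 0 < Real.sqrt kmin := Real.sqrt_pos.mpr hkmin
  have hsk : 0 < Real.sqrt k := Real.sqrt_pos.mpr hk0
  have hd : |qp - rp| ≤ 2 * R := (abs_sub qp rp).trans (by linarith)
  have hh : |hp1 - hp2| ≤ |hp1| + |hp2| := abs_sub hp1 hp2
  have h1n : |hp1| ≤ |hp1| + |hp2| := by have := abs_nonneg hp2; linarith
  have t2 : |(2 * k / ε) * hp1 * (qp - rp)| ≤ (4 * kmax * R / ε) * (|hp1| + |hp2|) := by
    rw [abs_mul, abs_mul, abs_of_nonneg (by positivity : (0:ℝ) ≤ 2 * k / ε)]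
    calc 2 * k / ε * |hp1| * |qp - rp| ≤ 2 * kmax / ε * (|hp1| + |hp2|) * (2 * R) := by
          gcongr <;> positivity
      _ = (4 * kmax * R / ε) * (|hp1| + |hp2|) := by ring
  have t3 : |(2 * k / ε) * qp * (hp1 - hp2)| ≤ (2 * kmax * R / ε) * (|hp1| + |hp2|) := by
    rw [abs_mul, abs_mul, abs_of_nonneg (by positivity : (0:ℝ) ≤ 2 * k / ε)]
    calc 2 * k / ε * |qp| * |hp1 - hp2| ≤ 2 * kmax / ε * R * (|hp1| + |hp2|) := by
          gcongr <;> positivity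
      _ = (2 * kmax * R / ε) * (|hp1| + |hp2|) := by ring
  have t4 : |(2 / ε ^ 2) * (qp - rp) * (hp1 - hp2)| ≤ (4 * R / ε ^ 2) * (|hp1| + |hp2|) := by
    rw [abs_mul, abs_mul, abs_of_nonneg (by positivity : (0:ℝ) ≤ 2 / ε ^ 2)]
    calc 2 / ε ^ 2 * |qp - rp| * |hp1 - hp2| ≤ 2 / ε ^ 2 * (2 * R) * (|hp1| + |hp2|) := by
          gcongr <;> positivity
      _ = (4 * R / ε ^ 2) * (|hp1| + |hp2|) := by ring
  have t5 : |2 * Real.sqrt k * hp1| ≤ 2 * Real.sqrt kmax * (|hp1| + |hp2|) := by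
    rw [abs_mul, abs_of_nonneg (show (0:ℝ) ≤ 2 * Real.sqrt k by positivity)]
    have h' : Real.sqrt k ≤ Real.sqrt kmax := Real.sqrt_le_sqrt hk2
    have hm := mul_le_mul (show 2 * Real.sqrt k ≤ 2 * Real.sqrt kmax by linarith) h1n
      (abs_nonneg _) (by positivity)
    linarith
  have t6 : |(hp1 - hp2) / (ε * Real.sqrt k)|
      ≤ 1 / (ε * Real.sqrt kmin) * (|hp1| + |hp2|) := by
    rw [abs_div, abs_of_nonneg (show (0:ℝ) ≤ ε * Real.sqrt k by positivity)]
    have h' : ε * Real.sqrt kmin ≤ ε * Real.sqrt k := by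
      have := Real.sqrt_le_sqrt hk1
      nlinarith [Real.sqrt_nonneg kmin]
    have hb := div_le_div₀ (by positivity) hh (by positivity) h'
    calc |hp1 - hp2| / (ε * Real.sqrt k) ≤ (|hp1| + |hp2|) / (ε * Real.sqrt kmin) := hb
      _ = 1 / (ε * Real.sqrt kmin) * (|hp1| + |hp2|) := by ring
  have tri : |hpp + (2 * k / ε) * hp1 * (qp - rp) + (2 * k / ε) * qp * (hp1 - hp2)
      + (2 / ε ^ 2) * (qp - rp) * (hp1 - hp2)
      - 2 * Real.sqrt k * hp1 - (hp1 - hp2) / (ε * Real.sqrt k)|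
      ≤ |hpp| + |(2 * k / ε) * hp1 * (qp - rp)| + |(2 * k / ε) * qp * (hp1 - hp2)|
        + |(2 / ε ^ 2) * (qp - rp) * (hp1 - hp2)|
        + |2 * Real.sqrt k * hp1| + |(hp1 - hp2) / (ε * Real.sqrt k)| := by
    have a1 := abs_sub (hpp + (2 * k / ε) * hp1 * (qp - rp) + (2 * k / ε) * qp * (hp1 - hp2)
      + (2 / ε ^ 2) * (qp - rp) * (hp1 - hp2) - 2 * Real.sqrt k * hp1)
      ((hp1 - hp2) / (ε * Real.sqrt k))
    have a2 := abs_sub (hpp + (2 * k / ε) * hp1 * (qp - rp) + (2 * k / ε) * qp * (hp1 - hp2)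
      + (2 / ε ^ 2) * (qp - rp) * (hp1 - hp2)) (2 * Real.sqrt k * hp1)
    have a3 := abs_add_le (hpp + (2 * k / ε) * hp1 * (qp - rp) + (2 * k / ε) * qp * (hp1 - hp2))
      ((2 / ε ^ 2) * (qp - rp) * (hp1 - hp2))
    have a4 := abs_add_le (hpp + (2 * k / ε) * hp1 * (qp - rp)) ((2 * k / ε) * qp * (hp1 - hp2))
    have a5 := abs_add_le hpp ((2 * k / ε) * hp1 * (qp - rp))
    linarith
  have he : (6 * kmax * R / ε + 4 * R / ε ^ 2 + 2 * Real.sqrt kmax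
        + 1 / (ε * Real.sqrt kmin)) * (|hp1| + |hp2|)
      = 4 * kmax * R / ε * (|hp1| + |hp2|) + 2 * kmax * R / ε * (|hp1| + |hp2|)
        + 4 * R / ε ^ 2 * (|hp1| + |hp2|) + 2 * Real.sqrt kmax * (|hp1| + |hp2|)
        + 1 / (ε * Real.sqrt kmin) * (|hp1| + |hp2|) := by ring
  linarith

lemma Q_abs_bound (ε kmin kmax k hp1 hp2 : ℝ)
    (hε : 0 < ε) (hkmin : 0 < kmin) (hk1 : kmin ≤ k) (hk2 : k ≤ kmax) :
    |(2 * k / ε) * hp1 * (hp1 - hp2) + (1 / ε ^ 2) * (hp1 - hp2) ^ 2|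
    ≤ (4 * kmax / ε + 2 / ε ^ 2) * (|hp1| ^ 2 + |hp2| ^ 2) := by
  have hk0 : 0 < k := lt_of_lt_of_le hkmin hk1
  have hkx : 0 < kmax := lt_of_lt_of_le hk0 hk2
  have hh : |hp1 - hp2| ≤ |hp1| + |hp2| := abs_sub hp1 hp2
  have key1 : |hp1| * (|hp1| + |hp2|) ≤ 2 * (|hp1| ^ 2 + |hp2| ^ 2) := by
    nlinarith [sq_nonneg (|hp1| - |hp2|), sq_nonneg |hp1|, sq_nonneg |hp2|]
  have key2 : (|hp1| + |hp2|) ^ 2 ≤ 2 * (|hp1| ^ 2 + |hp2| ^ 2) := by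
    nlinarith [sq_nonneg (|hp1| - |hp2|)]
  have t1 : |(2 * k / ε) * hp1 * (hp1 - hp2)| ≤ (2 * kmax / ε) * (2 * (|hp1| ^ 2 + |hp2| ^ 2)) := by
    rw [abs_mul, abs_mul, abs_of_nonneg (by positivity : (0:ℝ) ≤ 2 * k / ε)]
    calc 2 * k / ε * |hp1| * |hp1 - hp2| ≤ 2 * kmax / ε * (|hp1| * (|hp1| + |hp2|)) := by
          rw [← mul_assoc]
          gcongr <;> positivity
      _ ≤ 2 * kmax / ε * (2 * (|hp1| ^ 2 + |hp2| ^ 2)) := by gcongr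
  have t2 : |(1 / ε ^ 2) * (hp1 - hp2) ^ 2| ≤ (1 / ε ^ 2) * (2 * (|hp1| ^ 2 + |hp2| ^ 2)) := by
    rw [abs_mul, abs_of_nonneg (by positivity : (0:ℝ) ≤ 1 / ε ^ 2),
      abs_of_nonneg (sq_nonneg _)]
    have : (hp1 - hp2) ^ 2 ≤ (|hp1| + |hp2|) ^ 2 := by
      rw [← sq_abs]; exact pow_le_pow_left₀ (abs_nonneg _) hh 2
    calc (1 / ε ^ 2) * (hp1 - hp2) ^ 2 ≤ (1 / ε ^ 2) * (|hp1| + |hp2|) ^ 2 := by gcongr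
      _ ≤ (1 / ε ^ 2) * (2 * (|hp1| ^ 2 + |hp2| ^ 2)) := by gcongr
  have tri := abs_add_le ((2 * k / ε) * hp1 * (hp1 - hp2)) ((1 / ε ^ 2) * (hp1 - hp2) ^ 2)
  have he : (2 * kmax / ε) * (2 * (|hp1| ^ 2 + |hp2| ^ 2))
      + (1 / ε ^ 2) * (2 * (|hp1| ^ 2 + |hp2| ^ 2))
      = (4 * kmax / ε + 2 / ε ^ 2) * (|hp1| ^ 2 + |hp2| ^ 2) := by ring
  linarith



/-- The nonlinear operator `L₁(q,r)` of equation (3.200). -/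
noncomputable def L1 (ε k : ℝ) (q r : ℝ → ℝ) (z : ℝ) : ℝ :=
  deriv (deriv q) z + (2 * k / ε) * deriv q z * (deriv q z - deriv r z)
    + (1 / ε ^ 2) * (deriv q z - deriv r z) ^ 2
    - 2 * Real.sqrt k * deriv q z
    - (deriv q z - deriv r z) / (ε * Real.sqrt k)

/-- The nonlinear operator `L₂(q,r)` of equation (3.21). -/
noncomputable def L2 (ε k : ℝ) (q r : ℝ → ℝ) (z : ℝ) : ℝ :=
  deriv (deriv r) z + (2 * k / ε) * deriv q z * (deriv q z - deriv r z)
    + (1 / ε ^ 2) * (deriv q z - deriv r z) ^ 2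
    - 2 * Real.sqrt k * deriv q z
    - (deriv q z - deriv r z) / (ε * Real.sqrt k)

/-- The linearization of `L₁` at the base point `(q,r)`, applied to `(h₁,h₂)`. -/
noncomputable def L1lin (ε k : ℝ) (q r h₁ h₂ : ℝ → ℝ) (z : ℝ) : ℝ :=
  deriv (deriv h₁) z
    + (2 * k / ε) * deriv h₁ z * (deriv q z - deriv r z)
    + (2 * k / ε) * deriv q z * (deriv h₁ z - deriv h₂ z)
    + (2 / ε ^ 2) * (deriv q z - deriv r z) * (deriv h₁ z - deriv h₂ z)
    - 2 * Real.sqrt k * deriv h₁ z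
    - (deriv h₁ z - deriv h₂ z) / (ε * Real.sqrt k)

/-- The linearization of `L₂` at the base point `(q,r)`, applied to `(h₁,h₂)`. -/
noncomputable def L2lin (ε k : ℝ) (q r h₁ h₂ : ℝ → ℝ) (z : ℝ) : ℝ :=
  deriv (deriv h₂) z
    + (2 * k / ε) * deriv h₁ z * (deriv q z - deriv r z)
    + (2 * k / ε) * deriv q z * (deriv h₁ z - deriv h₂ z)
    + (2 / ε ^ 2) * (deriv q z - deriv r z) * (deriv h₁ z - deriv h₂ z)
    - 2 * Real.sqrt k * deriv h₁ z
    - (deriv h₁ z - deriv h₂ z) / (ε * Real.sqrt k)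

/-- The weighted Tikhonov-like functional `J_λ(q,r)` of (4.4) with the Carleman weight
`exp (-2 λ z)`. -/
noncomputable def Jfun (ε k lam Z : ℝ) (q r : ℝ → ℝ) : ℝ :=
  ∫ z in (0:ℝ)..Z, ((L1 ε k q r z) ^ 2 + (L2 ε k q r z) ^ 2) * Real.exp (-2 * lam * z)

lemma deriv_of_deriv_contDiff {f : ℝ → ℝ} (hf : ContDiff ℝ 2 f) :
    Differentiable ℝ (deriv f) := by
  have : ContDiff ℝ (1 + 1) f := by exact_mod_cast hf
  exact ((contDiff_succ_iff_deriv.mp this).2.2).differentiable one_ne_zero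

lemma deriv_add_eq {f g : ℝ → ℝ} (hf : ContDiff ℝ 2 f) (hg : ContDiff ℝ 2 g) :
    deriv (fun z => f z + g z) = fun z => deriv f z + deriv g z :=
  funext fun z => deriv_fun_add (hf.differentiable two_ne_zero z) (hg.differentiable two_ne_zero z)

lemma deriv2_add_eq {f g : ℝ → ℝ} (hf : ContDiff ℝ 2 f) (hg : ContDiff ℝ 2 g) :
    deriv (deriv (fun z => f z + g z)) = fun z => deriv (deriv f) z + deriv (deriv g) z := by
  rw [deriv_add_eq hf hg]
  exact funext fun z => deriv_add (deriv_of_deriv_contDiff hf z) (deriv_of_deriv_contDiff hg z)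

lemma deriv_add_eq' {f g : ℝ → ℝ} (hf : ContDiff ℝ 2 f) (hg : ContDiff ℝ 2 g) :
    deriv (fun z => deriv f z + deriv g z) = fun z => deriv (deriv f) z + deriv (deriv g) z :=
  funext fun z => deriv_add (deriv_of_deriv_contDiff hf z) (deriv_of_deriv_contDiff hg z)

lemma L1_expand (ε k : ℝ) (q r h₁ h₂ : ℝ → ℝ)
    (hq : ContDiff ℝ 2 q) (hr : ContDiff ℝ 2 r) (hh₁ : ContDiff ℝ 2 h₁) (hh₂ : ContDiff ℝ 2 h₂)
    (z : ℝ) :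
    L1 ε k (fun z => q z + h₁ z) (fun z => r z + h₂ z) z
      = L1 ε k q r z + L1lin ε k q r h₁ h₂ z
        + ((2 * k / ε) * deriv h₁ z * (deriv h₁ z - deriv h₂ z)
            + (1 / ε ^ 2) * (deriv h₁ z - deriv h₂ z) ^ 2) := by
  simp only [L1, L1lin, deriv_add_eq hq hh₁, deriv_add_eq hr hh₂,
    deriv_add_eq' hq hh₁, deriv_add_eq' hr hh₂]
  ring


lemma L2_expand (ε k : ℝ) (q r h₁ h₂ : ℝ → ℝ)
    (hq : ContDiff ℝ 2 q) (hr : ContDiff ℝ 2 r) (hh₁ : ContDiff ℝ 2 h₁) (hh₂ : ContDiff ℝ 2 h₂)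
    (z : ℝ) :
    L2 ε k (fun z => q z + h₁ z) (fun z => r z + h₂ z) z
      = L2 ε k q r z + L2lin ε k q r h₁ h₂ z
        + ((2 * k / ε) * deriv h₁ z * (deriv h₁ z - deriv h₂ z)
            + (1 / ε ^ 2) * (deriv h₁ z - deriv h₂ z) ^ 2) := by
  simp only [L2, L2lin, deriv_add_eq hq hh₁, deriv_add_eq hr hh₂,
    deriv_add_eq' hq hh₁, deriv_add_eq' hr hh₂]
  ring


/-- Bound on the first-order Taylor remainder of `J_λ`: the bounded linear functional
`(h₁,h₂) ↦ 2∫₀^Z (L₁·L₁,lin + L₂·L₂,lin) e^{-2λz} dz` is the Fréchet derivative of `J_λ`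
at `(q,r)` (item 1 of Theorem 5.1). -/
theorem frechet_remainder_bound_of_J (Z R ε kmin kmax : ℝ) (hZ : 0 < Z) (hR : 0 < R)
    (hε : ε ∈ Set.Ioo (0:ℝ) 1) (hkmin : 0 < kmin) (hkk : kmin ≤ kmax) :
    ∃ C₂ : ℝ, 0 < C₂ ∧
      ∀ lam : ℝ, 0 ≤ lam → ∀ k ∈ Set.Icc kmin kmax,
      ∀ q r h₁ h₂ : ℝ → ℝ,
      ContDiff ℝ 2 q → ContDiff ℝ 2 r → ContDiff ℝ 2 h₁ → ContDiff ℝ 2 h₂ →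
      (∀ z ∈ Set.Icc (0:ℝ) Z,
        |q z| ≤ R ∧ |deriv q z| ≤ R ∧ |deriv (deriv q) z| ≤ R ∧
        |r z| ≤ R ∧ |deriv r z| ≤ R ∧ |deriv (deriv r) z| ≤ R) →
      (∀ z ∈ Set.Icc (0:ℝ) Z,
        |h₁ z| ≤ R ∧ |deriv h₁ z| ≤ R ∧ |h₂ z| ≤ R ∧ |deriv h₂ z| ≤ R) →
      |Jfun ε k lam Z (fun z => q z + h₁ z) (fun z => r z + h₂ z)
          - Jfun ε k lam Z q r
          - 2 * ∫ z in (0:ℝ)..Z,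
              (L1 ε k q r z * L1lin ε k q r h₁ h₂ z
                + L2 ε k q r z * L2lin ε k q r h₁ h₂ z) * Real.exp (-2 * lam * z)|
        ≤ C₂ * ∫ z in (0:ℝ)..Z,
            ((deriv h₁ z) ^ 2 + (deriv (deriv h₁) z) ^ 2
              + (deriv h₂ z) ^ 2 + (deriv (deriv h₂) z) ^ 2) := by
  obtain ⟨hε0, hε1⟩ := hε
  have hkx : 0 < kmax := lt_of_lt_of_le hkmin hkk
  refine ⟨(4 * (R + (4 * kmax / ε) * R ^ 2 + 4 * R ^ 2 / ε ^ 2 + 2 * Real.sqrt kmax * R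
      + 2 * R / (ε * Real.sqrt kmin)) * (4 * kmax / ε + 2 / ε ^ 2)
      + 16 * (6 * kmax * R / ε + 4 * R / ε ^ 2 + 2 * Real.sqrt kmax
          + 1 / (ε * Real.sqrt kmin)) ^ 2
      + 16 * (4 * kmax / ε + 2 / ε ^ 2) ^ 2 * R ^ 2 + 7), by positivity, ?_⟩
  set M := R + (4 * kmax / ε) * R ^ 2 + 4 * R ^ 2 / ε ^ 2 + 2 * Real.sqrt kmax * R
      + 2 * R / (ε * Real.sqrt kmin) with hMdef
  set c₁ := 6 * kmax * R / ε + 4 * R / ε ^ 2 + 2 * Real.sqrt kmax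
      + 1 / (ε * Real.sqrt kmin) with hc₁def
  set c₂ := 4 * kmax / ε + 2 / ε ^ 2 with hc₂def
  have hM0 : 0 ≤ M := by rw [hMdef]; positivity
  have hc₁0 : 0 ≤ c₁ := by rw [hc₁def]; positivity
  have hc₂0 : 0 ≤ c₂ := by rw [hc₂def]; positivity
  clear_value M c₁ c₂
  intro lam hlam k hk q r h₁ h₂ hq hr hh₁ hh₂ hbnd hbnd2
  obtain ⟨hk1, hk2⟩ := hk
  -- continuity of all the relevant functions
  have cq1 : Continuous (deriv q) := hq.continuous_deriv one_le_two
  have cr1 : Continuous (deriv r) := hr.continuous_deriv one_le_two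
  have ch11 : Continuous (deriv h₁) := hh₁.continuous_deriv one_le_two
  have ch21 : Continuous (deriv h₂) := hh₂.continuous_deriv one_le_two
  have second : ∀ f : ℝ → ℝ, ContDiff ℝ 2 f → Continuous (deriv (deriv f)) := by
    intro f hf
    have : ContDiff ℝ (1 + 1) f := by exact_mod_cast hf
    exact ((contDiff_succ_iff_deriv.mp this).2.2).continuous_deriv le_rfl
  have cq2 : Continuous (deriv (deriv q)) := second q hq
  have cr2 : Continuous (deriv (deriv r)) := second r hr
  have ch12 : Continuous (deriv (deriv h₁)) := second h₁ hh₁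
  have ch22 : Continuous (deriv (deriv h₂)) := second h₂ hh₂
  have ca : Continuous (fun z => L1 ε k q r z) := by unfold L1; fun_prop
  have cb : Continuous (fun z => L2 ε k q r z) := by unfold L2; fun_prop
  have cA : Continuous (fun z => L1lin ε k q r h₁ h₂ z) := by unfold L1lin; fun_prop
  have cB : Continuous (fun z => L2lin ε k q r h₁ h₂ z) := by unfold L2lin; fun_prop
  have cQf : Continuous (fun z => (2 * k / ε) * deriv h₁ z * (deriv h₁ z - deriv h₂ z)
      + (1 / ε ^ 2) * (deriv h₁ z - deriv h₂ z) ^ 2) := by fun_prop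
  have cw : Continuous (fun z => Real.exp (-2 * lam * z)) := by fun_prop
  -- the three integrands now viewed as continuous functions
  have cF1 : Continuous (fun z =>
      ((L1 ε k q r z + L1lin ε k q r h₁ h₂ z
          + ((2 * k / ε) * deriv h₁ z * (deriv h₁ z - deriv h₂ z)
            + (1 / ε ^ 2) * (deriv h₁ z - deriv h₂ z) ^ 2)) ^ 2
        + (L2 ε k q r z + L2lin ε k q r h₁ h₂ z
          + ((2 * k / ε) * deriv h₁ z * (deriv h₁ z - deriv h₂ z)
            + (1 / ε ^ 2) * (deriv h₁ z - deriv h₂ z) ^ 2)) ^ 2)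
        * Real.exp (-2 * lam * z)) := by fun_prop
  have cF2 : Continuous (fun z => ((L1 ε k q r z) ^ 2 + (L2 ε k q r z) ^ 2)
      * Real.exp (-2 * lam * z)) := by fun_prop
  have cF3 : Continuous (fun z =>
      (L1 ε k q r z * L1lin ε k q r h₁ h₂ z + L2 ε k q r z * L2lin ε k q r h₁ h₂ z)
      * Real.exp (-2 * lam * z)) := by fun_prop
  have cG : Continuous (fun z =>
      (2 * (L1 ε k q r z + L2 ε k q r z)
          * ((2 * k / ε) * deriv h₁ z * (deriv h₁ z - deriv h₂ z)
            + (1 / ε ^ 2) * (deriv h₁ z - deriv h₂ z) ^ 2)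
        + (L1lin ε k q r h₁ h₂ z
            + ((2 * k / ε) * deriv h₁ z * (deriv h₁ z - deriv h₂ z)
              + (1 / ε ^ 2) * (deriv h₁ z - deriv h₂ z) ^ 2)) ^ 2
        + (L2lin ε k q r h₁ h₂ z
            + ((2 * k / ε) * deriv h₁ z * (deriv h₁ z - deriv h₂ z)
              + (1 / ε ^ 2) * (deriv h₁ z - deriv h₂ z) ^ 2)) ^ 2)
        * Real.exp (-2 * lam * z)) := by fun_prop
  have cS : Continuous (fun z => (deriv h₁ z) ^ 2 + (deriv (deriv h₁) z) ^ 2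
      + (deriv h₂ z) ^ 2 + (deriv (deriv h₂) z) ^ 2) := by fun_prop
  -- rewrite the perturbed functional
  have e1 : Jfun ε k lam Z (fun z => q z + h₁ z) (fun z => r z + h₂ z)
      = ∫ z in (0:ℝ)..Z,
        ((L1 ε k q r z + L1lin ε k q r h₁ h₂ z
          + ((2 * k / ε) * deriv h₁ z * (deriv h₁ z - deriv h₂ z)
            + (1 / ε ^ 2) * (deriv h₁ z - deriv h₂ z) ^ 2)) ^ 2
        + (L2 ε k q r z + L2lin ε k q r h₁ h₂ z
          + ((2 * k / ε) * deriv h₁ z * (deriv h₁ z - deriv h₂ z)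
            + (1 / ε ^ 2) * (deriv h₁ z - deriv h₂ z) ^ 2)) ^ 2)
        * Real.exp (-2 * lam * z) := by
    rw [Jfun]
    apply intervalIntegral.integral_congr
    intro z _
    simp only [L1_expand ε k q r h₁ h₂ hq hr hh₁ hh₂, L2_expand ε k q r h₁ h₂ hq hr hh₁ hh₂]
  rw [e1, Jfun]
  -- combine all integrals into one
  have i1 := cF1.intervalIntegrable (μ := MeasureTheory.volume) (0:ℝ) Z
  have i2 := cF2.intervalIntegrable (μ := MeasureTheory.volume) (0:ℝ) Z
  have i3 := (cF3.const_smul (2:ℝ)).intervalIntegrable (μ := MeasureTheory.volume) (0:ℝ) Z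
  rw [← intervalIntegral.integral_const_mul, ← intervalIntegral.integral_sub i1 i2,
    ← intervalIntegral.integral_sub (i1.sub i2) (by simpa only [Pi.smul_def, smul_eq_mul] using i3)]
  have e2 : ∀ z : ℝ,
      ((L1 ε k q r z + L1lin ε k q r h₁ h₂ z
          + ((2 * k / ε) * deriv h₁ z * (deriv h₁ z - deriv h₂ z)
            + (1 / ε ^ 2) * (deriv h₁ z - deriv h₂ z) ^ 2)) ^ 2
        + (L2 ε k q r z + L2lin ε k q r h₁ h₂ z
          + ((2 * k / ε) * deriv h₁ z * (deriv h₁ z - deriv h₂ z)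
            + (1 / ε ^ 2) * (deriv h₁ z - deriv h₂ z) ^ 2)) ^ 2)
        * Real.exp (-2 * lam * z)
      - ((L1 ε k q r z) ^ 2 + (L2 ε k q r z) ^ 2) * Real.exp (-2 * lam * z)
      - 2 * ((L1 ε k q r z * L1lin ε k q r h₁ h₂ z
          + L2 ε k q r z * L2lin ε k q r h₁ h₂ z) * Real.exp (-2 * lam * z))
      = (2 * (L1 ε k q r z + L2 ε k q r z)
          * ((2 * k / ε) * deriv h₁ z * (deriv h₁ z - deriv h₂ z)
            + (1 / ε ^ 2) * (deriv h₁ z - deriv h₂ z) ^ 2)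
        + (L1lin ε k q r h₁ h₂ z
            + ((2 * k / ε) * deriv h₁ z * (deriv h₁ z - deriv h₂ z)
              + (1 / ε ^ 2) * (deriv h₁ z - deriv h₂ z) ^ 2)) ^ 2
        + (L2lin ε k q r h₁ h₂ z
            + ((2 * k / ε) * deriv h₁ z * (deriv h₁ z - deriv h₂ z)
              + (1 / ε ^ 2) * (deriv h₁ z - deriv h₂ z) ^ 2)) ^ 2)
        * Real.exp (-2 * lam * z) := fun z => by ring
  rw [intervalIntegral.integral_congr (fun z _ => e2 z)]
  -- bound |∫ G| by C₂ ∫ S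
  have step1 := intervalIntegral.abs_integral_le_integral_abs (μ := MeasureTheory.volume)
    (a := (0:ℝ)) (b := Z)
    (f := fun z =>
      (2 * (L1 ε k q r z + L2 ε k q r z)
          * ((2 * k / ε) * deriv h₁ z * (deriv h₁ z - deriv h₂ z)
            + (1 / ε ^ 2) * (deriv h₁ z - deriv h₂ z) ^ 2)
        + (L1lin ε k q r h₁ h₂ z
            + ((2 * k / ε) * deriv h₁ z * (deriv h₁ z - deriv h₂ z)
              + (1 / ε ^ 2) * (deriv h₁ z - deriv h₂ z) ^ 2)) ^ 2
        + (L2lin ε k q r h₁ h₂ z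
            + ((2 * k / ε) * deriv h₁ z * (deriv h₁ z - deriv h₂ z)
              + (1 / ε ^ 2) * (deriv h₁ z - deriv h₂ z) ^ 2)) ^ 2)
        * Real.exp (-2 * lam * z)) hZ.le
  refine step1.trans ?_
  rw [← intervalIntegral.integral_const_mul]
  have cCS : Continuous (fun z => (4 * M * c₂ + 16 * c₁ ^ 2 + 16 * c₂ ^ 2 * R ^ 2 + 7)
      * ((deriv h₁ z) ^ 2 + (deriv (deriv h₁) z) ^ 2
        + (deriv h₂ z) ^ 2 + (deriv (deriv h₂) z) ^ 2)) := by fun_prop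
  beta_reduce
  apply intervalIntegral.integral_mono_on hZ.le (cG.abs.intervalIntegrable (μ := MeasureTheory.volume) 0 Z)
    (cCS.intervalIntegrable (μ := MeasureTheory.volume) 0 Z)
  -- the pointwise estimate
  intro z hz
  obtain ⟨-, hq1, hq2, -, hr1, hr2⟩ := hbnd z hz
  obtain ⟨-, hh1b, -, hh2b⟩ := hbnd2 z hz
  have ha : |L1 ε k q r z| ≤ M := by
    rw [hMdef]; unfold L1
    exact L1_abs_bound ε kmin kmax R k _ _ _ hε0 hkmin hk1 hk2 hR hq2 hq1 hr1
  have hb : |L2 ε k q r z| ≤ M := by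
    rw [hMdef]; unfold L2
    exact L1_abs_bound ε kmin kmax R k _ _ _ hε0 hkmin hk1 hk2 hR hr2 hq1 hr1
  have hA : |L1lin ε k q r h₁ h₂ z|
      ≤ |deriv (deriv h₁) z| + c₁ * (|deriv h₁ z| + |deriv h₂ z|) := by
    rw [hc₁def]; unfold L1lin
    exact Llin_abs_bound ε kmin kmax R k _ _ _ _ _ hε0 hkmin hk1 hk2 hR hq1 hr1
  have hB : |L2lin ε k q r h₁ h₂ z|
      ≤ |deriv (deriv h₂) z| + c₁ * (|deriv h₁ z| + |deriv h₂ z|) := by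
    rw [hc₁def]; unfold L2lin
    exact Llin_abs_bound ε kmin kmax R k _ _ _ _ _ hε0 hkmin hk1 hk2 hR hq1 hr1
  have hQ : |(2 * k / ε) * deriv h₁ z * (deriv h₁ z - deriv h₂ z)
      + (1 / ε ^ 2) * (deriv h₁ z - deriv h₂ z) ^ 2|
      ≤ c₂ * (|deriv h₁ z| ^ 2 + |deriv h₂ z| ^ 2) := by
    rw [hc₂def]
    exact Q_abs_bound ε kmin kmax k _ _ hε0 hkmin hk1 hk2
  have hw0 : (0:ℝ) ≤ Real.exp (-2 * lam * z) := (Real.exp_pos _).le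
  have hw1 : Real.exp (-2 * lam * z) ≤ 1 := by
    apply Real.exp_le_one_iff.mpr
    nlinarith [hz.1]
  have key := key_scalar M c₁ c₂ R hM0 hc₁0 hc₂0 hR.le
    (L1 ε k q r z) (L2 ε k q r z) (L1lin ε k q r h₁ h₂ z) (L2lin ε k q r h₁ h₂ z)
    ((2 * k / ε) * deriv h₁ z * (deriv h₁ z - deriv h₂ z)
      + (1 / ε ^ 2) * (deriv h₁ z - deriv h₂ z) ^ 2)
    (|deriv h₁ z|) (|deriv h₂ z|) (|deriv (deriv h₁) z|) (|deriv (deriv h₂) z|)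
    (Real.exp (-2 * lam * z))
    (abs_nonneg _) (abs_nonneg _) (abs_nonneg _) (abs_nonneg _)
    hh1b hh2b ha hb hA hB hQ hw0 hw1
  simpa [sq_abs] using key
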